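/- Suppose φ is a Radon measure over a locally compact Hausdorff space X, Y is a separable metric space, f is a φ-measurable Y-valued function, and X is φ-almost equal to the union of a countable family of compact subsets of X. Then the push-forward f#φ, defined by (f#φ)(B) = φ(f⁻¹[B]) for B ⊂ Y, is a Borel regular outer measure over Y. -/

import Mathlib

open MeasureTheory

section Aux
open Set Filter Topology ENNReal

/-- Compact approximation for simple functions: continuity on a large compact set. -/
lemma simpleFunc_compact_approx {X Y : Type*} [TopologicalSpace X] [T2Space X]
    [MeasurableSpace X] [OpensMeasurableSpace X] [TopologicalSpace Y] [MeasurableSpace Y]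
    (φ : Measure X) [φ.InnerRegularCompactLTTop] (u : SimpleFunc X Y)
    (E : Set X) (hE : MeasurableSet E) (hEfin : φ E ≠ ∞) {ε : ℝ≥0∞} (hε : ε ≠ 0) :
    ∃ C, C ⊆ E ∧ IsCompact C ∧ ContinuousOn u C ∧ φ (E \ C) ≤ ε := by
  classical
  set F := u.range with hF
  have key : ∀ v : Y, ∃ c, IsCompact c ∧ c ⊆ E ∩ u ⁻¹' {v} ∧
      φ ((E ∩ u ⁻¹' {v}) \ c) ≤ ε / F.card := by
    intro v
    have hm : MeasurableSet (E ∩ u ⁻¹' {v}) := hE.inter (u.measurableSet_fiber v)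
    have hfin : φ (E ∩ u ⁻¹' {v}) ≠ ∞ :=
      ne_top_of_le_ne_top hEfin (measure_mono inter_subset_left)
    have hpos : ε / F.card ≠ 0 :=
      (ENNReal.div_pos hε (ENNReal.natCast_ne_top _)).ne'
    obtain ⟨c, hcsub, hcomp, hlt⟩ := hm.exists_isCompact_diff_lt hfin hpos
    exact ⟨c, hcomp, hcsub, hlt.le⟩
  choose c hcomp hsub hmeas using key
  refine ⟨⋃ v ∈ F, c v, ?_, ?_, ?_, ?_⟩
  · exact iUnion₂_subset fun v _ => (hsub v).trans inter_subset_left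
  · exact F.finite_toSet.isCompact_biUnion fun v _ => hcomp v
  · intro x hx
    obtain ⟨v₀, hv₀F, hxc⟩ := mem_iUnion₂.1 hx
    have hux : u x = v₀ := ((hsub v₀) hxc).2
    have hUopen : IsOpen (⋃ v ∈ F.erase v₀, c v)ᶜ :=
      (isClosed_biUnion_finset fun v _ => (hcomp v).isClosed).isOpen_compl
    have hxU : x ∈ (⋃ v ∈ F.erase v₀, c v)ᶜ := by
      simp only [Set.mem_compl_iff, Set.mem_iUnion, not_exists]
      intro v hv hxv
      exact (Finset.ne_of_mem_erase hv) (((hsub v) hxv).2.symm.trans hux)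
    have hU : (⋃ v ∈ F.erase v₀, c v)ᶜ ∈ 𝓝[(⋃ v ∈ F, c v)] x :=
      mem_nhdsWithin_of_mem_nhds (hUopen.mem_nhds hxU)
    refine ContinuousWithinAt.congr_of_eventuallyEq
      (continuousWithinAt_const (b := u x)) ?_ rfl
    filter_upwards [hU, self_mem_nhdsWithin] with x' hx'U hx'C
    obtain ⟨v, hvF, hx'c⟩ := mem_iUnion₂.1 hx'C
    have hv : v = v₀ := by
      by_contra h
      exact hx'U (mem_iUnion₂.2 ⟨v, Finset.mem_erase.2 ⟨h, hvF⟩, hx'c⟩)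
    rw [((hsub v) hx'c).2, hv, hux]
  · have hsubd : E \ (⋃ v ∈ F, c v) ⊆ ⋃ v ∈ F, ((E ∩ u ⁻¹' {v}) \ c v) := by
      rintro x ⟨hxE, hxn⟩
      refine mem_iUnion₂.2 ⟨u x, u.mem_range_self x, ⟨⟨hxE, rfl⟩, fun hc => ?_⟩⟩
      exact hxn (mem_iUnion₂.2 ⟨u x, u.mem_range_self x, hc⟩)
    calc φ (E \ ⋃ v ∈ F, c v) ≤ ∑ v ∈ F, φ ((E ∩ u ⁻¹' {v}) \ c v) :=
          (measure_mono hsubd).trans (measure_biUnion_finset_le F _)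
      _ ≤ ∑ _v ∈ F, ε / F.card := Finset.sum_le_sum fun v _ => hmeas v
      _ = F.card * (ε / F.card) := by rw [Finset.sum_const, nsmul_eq_mul]
      _ ≤ ε := ENNReal.mul_div_le
/-- Lusin's theorem (sufficient version): a measurable map into a second countable
metric space is continuous on a compact set almost filling a finite-measure set. -/
lemma lusin_compact {X Y : Type*} [TopologicalSpace X] [T2Space X]
    [MeasurableSpace X] [OpensMeasurableSpace X]
    [MetricSpace Y] [SecondCountableTopology Y] [MeasurableSpace Y] [BorelSpace Y]
    (φ : Measure X) [φ.InnerRegularCompactLTTop] {g : X → Y} (hg : Measurable g)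
    (E : Set X) (hE : MeasurableSet E) (hEfin : φ E ≠ ∞) {ε : ℝ≥0∞} (hε : ε ≠ 0) :
    ∃ C, C ⊆ E ∧ IsCompact C ∧ ContinuousOn g C ∧ φ (E \ C) ≤ ε := by
  obtain ⟨δ, δpos, hδ⟩ := ENNReal.exists_pos_sum_of_countable' hε ℕ
  have hδtop : ∀ n, δ n ≠ ∞ :=
    fun n => ne_top_of_le_ne_top (hδ.trans_le le_top).ne (ENNReal.le_tsum n)
  have hsm : StronglyMeasurable g := hg.stronglyMeasurable
  set s : ℕ → SimpleFunc X Y := hsm.approx with hs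
  have hδ0pos : 0 < (δ 0).toReal := ENNReal.toReal_pos (δpos 0).ne' (hδtop 0)
  obtain ⟨t, htsub, htm, htμ, hunif⟩ := tendstoUniformlyOn_of_ae_tendsto
      (fun n => (s n).stronglyMeasurable) hsm hE hEfin
      (ae_of_all _ fun x _ => hsm.tendsto_approx x) hδ0pos
  have htμ' : φ t ≤ δ 0 := by rwa [ENNReal.ofReal_toReal (hδtop 0)] at htμ
  have hEt : MeasurableSet (E \ t) := hE.diff htm
  have hEtfin : φ (E \ t) ≠ ∞ := ne_top_of_le_ne_top hEfin (measure_mono diff_subset)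
  obtain ⟨c', hc'sub, hc'comp, hc'μ⟩ := hEt.exists_isCompact_diff_lt hEtfin (δpos 1).ne'
  have hCn : ∀ n : ℕ, ∃ C, C ⊆ E ∧ IsCompact C ∧ ContinuousOn (s n) C ∧
      φ (E \ C) ≤ δ (n + 2) :=
    fun n => simpleFunc_compact_approx φ (s n) E hE hEfin (δpos (n + 2)).ne'
  choose C hCE hCcomp hCcont hCμ using hCn
  refine ⟨c' ∩ ⋂ n, C n, ?_, ?_, ?_, ?_⟩
  · exact (inter_subset_left).trans (hc'sub.trans diff_subset)
  · exact hc'comp.inter_right (isClosed_iInter fun n => (hCcomp n).isClosed)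
  · refine TendstoUniformlyOn.continuousOn
      (hunif.mono ((inter_subset_left).trans hc'sub)) ?_
    exact Eventually.frequently <| Eventually.of_forall fun n => (hCcont n).mono
      ((inter_subset_right).trans (iInter_subset _ n))
  · have hsubd : E \ (c' ∩ ⋂ n, C n) ⊆ (t ∪ ((E \ t) \ c')) ∪ ⋃ n, (E \ C n) := by
      rintro x ⟨hxE, hxn⟩
      rw [Set.mem_inter_iff, not_and_or] at hxn
      rcases hxn with hxc | hxI
      · by_cases hxt : x ∈ t
        · exact Or.inl (Or.inl hxt)
        · exact Or.inl (Or.inr ⟨⟨hxE, hxt⟩, hxc⟩)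
      · rw [Set.mem_iInter, not_forall] at hxI
        obtain ⟨n, hn⟩ := hxI
        exact Or.inr (mem_iUnion.2 ⟨n, hxE, hn⟩)
    calc φ (E \ (c' ∩ ⋂ n, C n))
        ≤ (φ t + φ ((E \ t) \ c')) + ∑' n, φ (E \ C n) := by
          refine (measure_mono hsubd).trans ?_
          refine (measure_union_le _ _).trans ?_
          exact add_le_add (measure_union_le _ _) (measure_iUnion_le _)
      _ ≤ (δ 0 + δ 1) + ∑' n, δ (n + 2) := by
          refine add_le_add (add_le_add htμ' hc'μ.le) ?_
          exact ENNReal.tsum_le_tsum fun n => hCμ n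
      _ = ∑' n, δ n := by
          conv_rhs => rw [tsum_eq_zero_add' ENNReal.summable,
            tsum_eq_zero_add' ENNReal.summable]
          rw [add_assoc]
      _ ≤ ε := hδ.le


end Aux

/-- if `φ` is a Radon measure over a locally compact Hausdorff
space `X`, `Y` is a separable metric space, `f` is a `φ`-measurable `Y`-valued
function, and `X` is `φ`-almost equal to a countable union of compact sets,
then the push-forward `f#φ`, `B ↦ φ (f ⁻¹ B)`, is a Borel regular outer
measure over `Y`: every Borel subset of `Y` is Carathéodory measurable for it,
and every subset of `Y` is contained in a Borel set of the same `f#φ`-measure. -/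
theorem stmt7 {X Y : Type*} [TopologicalSpace X] [LocallyCompactSpace X]
    [T2Space X] [MeasurableSpace X] [BorelSpace X]
    [MetricSpace Y] [TopologicalSpace.SeparableSpace Y]
    [MeasurableSpace Y] [BorelSpace Y]
    (φ : Measure X) [φ.Regular]
    (f : X → Y) (hf : AEMeasurable f φ)
    (K : ℕ → Set X) (hK : ∀ i, IsCompact (K i)) (hKcov : φ ((⋃ i, K i)ᶜ) = 0) :
    -- Borel sets are Carathéodory measurable for `B ↦ φ (f ⁻¹ B)`:
    (∀ B : Set Y, MeasurableSet B →
      ∀ A : Set Y, φ (f ⁻¹' A) = φ (f ⁻¹' (A ∩ B)) + φ (f ⁻¹' (A \ B))) ∧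
    -- Borel regularity: every set is contained in a Borel set of equal measure:
    (∀ A : Set Y, ∃ B : Set Y, MeasurableSet B ∧ A ⊆ B ∧
      φ (f ⁻¹' B) = φ (f ⁻¹' A)) := by
  open Set Filter Topology ENNReal in
  have _ : SecondCountableTopology Y := UniformSpace.secondCountable_of_separable Y
  set g : X → Y := hf.mk f with hgdef
  have hg : Measurable g := hf.measurable_mk
  have heq : ∀ S : Set Y, φ (f ⁻¹' S) = φ (g ⁻¹' S) := by
    intro S
    refine measure_congr ?_
    rw [Filter.eventuallyEq_set]
    filter_upwards [hf.ae_eq_mk] with x hx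
    simp only [Set.mem_preimage, ← hgdef, hx]
  constructor
  · intro B hB A
    rw [heq, heq, heq, Set.preimage_inter, Set.preimage_diff]
    exact (measure_inter_add_diff _ (hg hB)).symm
  · intro A
    set t := toMeasurable φ (g ⁻¹' A) with htdef
    have htsub : g ⁻¹' A ⊆ t := subset_toMeasurable φ _
    have htm : MeasurableSet t := measurableSet_toMeasurable φ _
    have hE : ∀ i : ℕ, MeasurableSet (tᶜ ∩ K i) :=
      fun i => htm.compl.inter (hK i).measurableSet
    have hEfin : ∀ i : ℕ, φ (tᶜ ∩ K i) ≠ ∞ :=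
      fun i => ne_top_of_le_ne_top (hK i).measure_lt_top.ne
        (measure_mono inter_subset_right)
    have hCim : ∀ i m : ℕ, ∃ C, C ⊆ tᶜ ∩ K i ∧ IsCompact C ∧ ContinuousOn g C ∧
        φ ((tᶜ ∩ K i) \ C) ≤ ((m : ℝ≥0∞) + 1)⁻¹ := by
      intro i m
      refine lusin_compact φ hg _ (hE i) (hEfin i) ?_
      simp
    choose C hCsub hCcomp hCcont hCμ using hCim
    set W : Set X := ⋃ i, ⋃ m, C i m with hWdef
    refine ⟨(⋃ i, ⋃ m, g '' C i m)ᶜ, ?_, ?_, ?_⟩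
    · refine MeasurableSet.compl ?_
      refine MeasurableSet.iUnion fun i => MeasurableSet.iUnion fun m => ?_
      exact (((hCcomp i m).image_of_continuousOn (hCcont i m)).isClosed).measurableSet
    · intro y hy
      simp only [Set.mem_compl_iff, Set.mem_iUnion, not_exists]
      rintro i m ⟨x, hxC, rfl⟩
      exact ((hCsub i m) hxC).1 (htsub hy)
    · -- measure equality
      have hnullE : ∀ i : ℕ, φ ((tᶜ ∩ K i) \ ⋃ m, C i m) = 0 := by
        intro i
        refine le_antisymm ?_ zero_le
        refine ge_of_tendsto ENNReal.tendsto_inv_nat_nhds_zero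
          (Eventually.of_forall fun m => ?_)
        calc φ ((tᶜ ∩ K i) \ ⋃ m', C i m') ≤ φ ((tᶜ ∩ K i) \ C i m) :=
              measure_mono (diff_subset_diff_right (subset_iUnion _ m))
          _ ≤ ((m : ℝ≥0∞) + 1)⁻¹ := hCμ i m
          _ ≤ ((m : ℝ≥0∞))⁻¹ := ENNReal.inv_le_inv.2 (le_add_of_nonneg_right zero_le_one)
      have hnull : φ (tᶜ \ W) = 0 := by
        refine measure_mono_null ?_
          (measure_union_null hKcov (measure_iUnion_null fun i => hnullE i))
        rintro x ⟨hxt, hxW⟩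
        by_cases hxK : x ∈ ⋃ i, K i
        · obtain ⟨i, hi⟩ := mem_iUnion.1 hxK
          refine Or.inr (mem_iUnion.2 ⟨i, ⟨hxt, hi⟩, fun hc => ?_⟩)
          exact hxW (mem_iUnion.2 ⟨i, hc⟩)
        · exact Or.inl hxK
      have hkey : g ⁻¹' (⋃ i, ⋃ m, g '' C i m)ᶜ ⊆ t ∪ (tᶜ \ W) := by
        intro x hx
        by_cases hxt : x ∈ t
        · exact Or.inl hxt
        · refine Or.inr ⟨hxt, fun hxW => ?_⟩
          obtain ⟨i, m, hxC⟩ := by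
            simpa only [hWdef, Set.mem_iUnion] using hxW
          exact hx (mem_iUnion.2 ⟨i, mem_iUnion.2 ⟨m, Set.mem_image_of_mem g hxC⟩⟩)
      rw [heq, heq]
      refine le_antisymm ?_ ?_
      · calc φ (g ⁻¹' (⋃ i, ⋃ m, g '' C i m)ᶜ) ≤ φ (t ∪ (tᶜ \ W)) :=
              measure_mono hkey
          _ ≤ φ t + φ (tᶜ \ W) := measure_union_le _ _
          _ = φ (g ⁻¹' A) := by rw [hnull, add_zero, htdef, measure_toMeasurable]
      · refine measure_mono (Set.preimage_mono ?_)
        intro y hy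
        simp only [Set.mem_compl_iff, Set.mem_iUnion, not_exists]
        rintro i m ⟨x, hxC, rfl⟩
        exact ((hCsub i m) hxC).1 (htsub hy)
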